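/- Assume the Siegel–Walfisz type estimate π(x; q(q-1), r) = π(x)/φ(q(q-1)) + O(x/(log x)^4) holds uniformly in r coprime to q(q-1). Let b ≥ 2, q prime with q ∤ b, N > q·b^q, F_{q,N} = {p prime : b^q < p ≤ N/q}, and F_k = {p ∈ F_{q,N} : ∃ r ∈ Z_k with p ≡ r (mod q(q-1))}. Then |F_k| = (|Z_k|/φ(q(q-1)))·|F_{q,N}| + ε_k with Σ_{k=0}^{q-1} |ε_k| ≤ C·N/(q²·log N) for an absolute constant C. -/

import Mathlib

/-- Counting function for primes `p ≤ x` with `p ≡ r (mod m)`. -/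
noncomputable def primePiMod (x : ℝ) (m r : ℕ) : ℕ :=
  Nat.card {p : ℕ | p.Prime ∧ (p : ℝ) ≤ x ∧ p % m = r % m}

/-- Counting function for primes `p ≤ x`. -/
noncomputable def primePi (x : ℝ) : ℕ := Nat.card {p : ℕ | p.Prime ∧ (p : ℝ) ≤ x}

lemma aux_succ_mul : ∀ n : ℕ, (n + 1) * n ≤ 2 ^ (n + 1) := by
  intro n
  induction n with
  | zero => simp
  | succ n ih =>
    rcases Nat.lt_or_ge n 2 with h | h
    · interval_cases n <;> norm_num
    · have : (n + 2) * (n + 1) ≤ 2 * ((n + 1) * n) := by nlinarith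
      calc (n + 1 + 1) * (n + 1) ≤ 2 * ((n + 1) * n) := this
        _ ≤ 2 * 2 ^ (n + 1) := by omega
        _ = 2 ^ (n + 1 + 1) := by ring

lemma aux_mul_le_two_pow (q : ℕ) : q * (q - 1) ≤ 2 ^ q := by
  cases q with
  | zero => simp
  | succ n => simpa using aux_succ_mul n

lemma aux_card_filter {P : ℕ → Prop} [DecidablePred P] {n : ℕ} (h : ∀ p, P p → p < n) :
    Nat.card {p | P p} = ((Finset.range n).filter P).card := by
  rw [Nat.card_coe_set_eq, ← Set.ncard_coe_finset]
  congr 1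
  ext p
  simp only [Finset.coe_filter, Finset.mem_range, Set.mem_setOf_eq]
  exact ⟨fun hp => ⟨h p hp, hp⟩, fun hp => hp.2⟩

lemma aux_card_filter_zmod {n : ℕ} [NeZero n] (Q : ZMod n → Prop) [DecidablePred Q] :
    Nat.card {r : ZMod n | Q r} = (Finset.univ.filter Q).card := by
  rw [Nat.card_coe_set_eq, ← Set.ncard_coe_finset]
  congr 1
  ext r; simp

lemma aux_mod_iff {m : ℕ} [NeZero m] (p : ℕ) (r : ZMod m) :
    p % m = r.val % m ↔ (p : ZMod m) = r := by
  have h2 : ((r.val : ZMod m)) = r := by rw [ZMod.natCast_val, ZMod.cast_id]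
  exact ⟨fun h => by rw [← h2]; exact (ZMod.natCast_eq_natCast_iff' _ _ _).mpr h,
    fun h => (ZMod.natCast_eq_natCast_iff' _ _ _).mp (by rw [h2]; exact h)⟩

lemma aux_unit_coprime {m : ℕ} [NeZero m] {r : ZMod m} (h : IsUnit r) :
    Nat.Coprime r.val m := by
  rcases h with ⟨u, rfl⟩
  exact ZMod.val_coe_unit_coprime u

lemma aux_t1 (C N Q L Lq l2 : ℝ) (hC : 0 < C) (hN0 : 0 < N) (hq2 : 2 ≤ Q)
    (hL2 : 2 < L) (hl2 : (0.6931471803:ℝ) < l2) (hLq3 : Q * l2 ≤ Lq)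
    (hLqh : L / 2 < Lq) :
    Q ^ 2 * (C * (N / Q) / Lq ^ 4) ≤ 7 * C * N / (Q ^ 2 * L) := by
  have hQ0 : 0 < Q := by linarith
  have hLq0 : 0 < Lq := by linarith
  rw [show Q ^ 2 * (C * (N / Q) / Lq ^ 4) = (Q ^ 2 * (C * (N / Q))) / Lq ^ 4 from by ring,
    div_le_div_iff₀ (by positivity) (by positivity)]
  have hLq4 : Q^3 * l2^3 * (L/2) ≤ Lq ^ 4 := by
    have h1 : (Q * l2)^3 ≤ Lq ^ 3 := pow_le_pow_left₀ (by positivity) hLq3 3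
    calc Q^3 * l2^3 * (L/2) = (Q*l2)^3 * (L/2) := by ring
      _ ≤ Lq^3 * Lq := mul_le_mul h1 hLqh.le (by linarith) (by positivity)
      _ = Lq ^ 4 := by ring
  have hone : (1:ℝ) ≤ 7 * l2^3 / 2 := by
    have h1 : (0.69:ℝ)^3 ≤ l2^3 := pow_le_pow_left₀ (by norm_num) (by linarith) 3
    nlinarith
  have hpos : (0:ℝ) ≤ C * N * (Q^3 * L) :=
    mul_nonneg (mul_nonneg hC.le hN0.le) (mul_nonneg (by positivity) (by linarith))
  calc Q^2 * (C * (N/Q)) * (Q^2 * L) = C * N * (Q^3 * L) := by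
        field_simp
    _ = C * N * (Q^3 * L) * 1 := by ring
    _ ≤ C * N * (Q^3 * L) * (7 * l2^3 / 2) := mul_le_mul_of_nonneg_left hone hpos
    _ = 7 * C * N * (Q^3 * l2^3 * (L/2)) := by ring
    _ ≤ 7 * C * N * Lq ^ 4 := mul_le_mul_of_nonneg_left hLq4 (by positivity)

lemma aux_t2 (C N Q B L lb l2 lq : ℝ) (hC : 0 < C) (hq2 : 2 ≤ Q) (hB4 : 4 ≤ B)
    (hl2 : (0.6931471803:ℝ) < l2) (hlb : l2 ≤ lb) (hqBN : Q * B < N) (hL2 : 2 < L)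
    (hlq1 : lq ≤ Q - 1) (hLle : L ≤ lq + Q * lb + (N / (Q * B) - 1)) :
    Q ^ 2 * (C * B / (Q * lb) ^ 4) ≤ 13 * C * N / (Q ^ 2 * L) := by
  have hQ0 : 0 < Q := by linarith
  have hB0 : 0 < B := by linarith
  have hN0 : 0 < N := by nlinarith
  have hlb0 : 0 < lb := by linarith
  rw [show Q ^ 2 * (C * B / (Q * lb) ^ 4) = (Q ^ 2 * (C * B)) / (Q * lb) ^ 4 from by ring,
    div_le_div_iff₀ (by positivity) (by positivity)]
  have key : B * L ≤ 13 * lb ^ 4 * N := by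
    have hlqle : lq ≤ 1.45 * (Q * lb) := by nlinarith
    have hLle2 : L ≤ 2.45 * (Q * lb) + N / (Q * B) := by nlinarith
    have h1 : B * (2.45 * (Q * lb)) ≤ 2.45 * lb * N := by nlinarith
    have h2 : B * (N / (Q * B)) = N / Q := by field_simp
    have h3 : N / Q ≤ 0.73 * lb * N := by
      rw [div_le_iff₀ hQ0]
      have hlbQ : (1.38:ℝ) ≤ lb * Q := by
        nlinarith [mul_nonneg (by linarith : (0:ℝ) ≤ lb - 0.69) (by linarith : (0:ℝ) ≤ Q - 2)]
      nlinarith [mul_le_mul_of_nonneg_left hlbQ hN0.le]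
    have hlb2 : (0.47:ℝ) ≤ lb ^ 2 := by nlinarith
    have hlb3 : (0.32:ℝ) ≤ lb ^ 3 := by nlinarith [mul_le_mul_of_nonneg_left hlb2 hlb0.le]
    have hBL : B * L ≤ 3.18 * lb * N := by
      have hm := mul_le_mul_of_nonneg_left hLle2 hB0.le
      have hexp : B * (2.45 * (Q * lb) + N / (Q * B)) = B * (2.45 * (Q * lb)) + B * (N / (Q * B)) := by
        ring
      rw [hexp, h2] at hm
      linarith
    nlinarith [mul_nonneg (mul_nonneg hlb0.le (by linarith : (0:ℝ) ≤ 13 * lb^3 - 3.18)) hN0.le]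
  calc Q^2 * (C * B) * (Q^2 * L) = C * Q^4 * (B * L) := by ring
    _ ≤ C * Q^4 * (13 * lb^4 * N) := mul_le_mul_of_nonneg_left key (by positivity)
    _ = 13 * C * N * (Q * lb)^4 := by ring

lemma aux_analytic (C : ℝ) (hC : 0 < C) (b q : ℕ) (hb : 2 ≤ b) (hq : 2 ≤ q)
    (N : ℝ) (hN : (q : ℝ) * (b : ℝ) ^ q < N) :
    (q : ℝ) ^ 2 * (C * (N / q) / (Real.log (N / q)) ^ 4
      + C * ((b : ℝ) ^ q) / (Real.log ((b : ℝ) ^ q)) ^ 4)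
      ≤ 20 * C * N / ((q : ℝ) ^ 2 * Real.log N) := by
  have hq0 : (0:ℝ) < q := by positivity
  have hq2 : (2:ℝ) ≤ q := by exact_mod_cast hq
  have hb2 : (2:ℝ) ≤ b := by exact_mod_cast hb
  have hb0 : (0:ℝ) < b := by linarith
  have hB4 : (4:ℝ) ≤ (b:ℝ) ^ q := by
    calc (4:ℝ) = 2 ^ 2 := by norm_num
    _ ≤ (b:ℝ) ^ 2 := by nlinarith
    _ ≤ (b:ℝ) ^ q := pow_le_pow_right₀ (by linarith) hq
  have hB0 : (0:ℝ) < (b:ℝ)^q := by linarith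
  have hN8 : (8:ℝ) < N := by nlinarith
  have hN0 : (0:ℝ) < N := by linarith
  have hNq : (b:ℝ)^q < N / q := (lt_div_iff₀ hq0).mpr (by nlinarith)
  have hNq0 : (0:ℝ) < N / q := by linarith
  have hl2' : (0.6931471803:ℝ) < Real.log 2 := Real.log_two_gt_d9
  have hlbl2 : Real.log 2 ≤ Real.log b := Real.log_le_log (by norm_num) hb2
  have hlb0 : 0 < Real.log b := by linarith
  have hlogB : Real.log ((b:ℝ)^q) = q * Real.log b := by rw [Real.log_pow]
  have hlogqB : Real.log ((q:ℝ) * (b:ℝ)^q) = Real.log q + q * Real.log b := by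
    rw [Real.log_mul (by positivity) (by positivity), hlogB]
  have hL2 : (2:ℝ) < Real.log N := by
    have h0 : Real.log 8 < Real.log N := Real.log_lt_log (by norm_num) hN8
    have h8 : Real.log 8 = 3 * Real.log 2 := by
      rw [show (8:ℝ) = 2 ^ 3 by norm_num, Real.log_pow]; push_cast; ring
    linarith
  have hlogq : Real.log q < Real.log N / 2 := by
    have hqq : (q:ℝ) * q < N := by
      have h1 : (q:ℝ) ≤ (b:ℝ)^q := by
        calc (q:ℝ) ≤ 2 ^ q := by exact_mod_cast (Nat.lt_two_pow_self (n := q)).le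
        _ ≤ (b:ℝ)^q := pow_le_pow_left₀ (by norm_num) hb2 q
      nlinarith
    have h2 : Real.log ((q:ℝ) * q) < Real.log N := Real.log_lt_log (by positivity) hqq
    rw [Real.log_mul (by positivity) (by positivity)] at h2
    linarith
  have hLqL : Real.log (N / q) = Real.log N - Real.log q := by
    rw [Real.log_div (by positivity) (by positivity)]
  have hLqhalf : Real.log N / 2 < Real.log (N / q) := by rw [hLqL]; linarith
  have hLq3 : (q:ℝ) * Real.log 2 ≤ Real.log (N / q) := by
    have h1 : (q:ℝ) * Real.log 2 = Real.log ((2:ℝ)^q) := by rw [Real.log_pow]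
    have h2 : (2:ℝ)^q ≤ N / q := by
      have : (2:ℝ)^q ≤ (b:ℝ)^q := pow_le_pow_left₀ (by norm_num) hb2 q
      linarith
    rw [h1]
    exact Real.log_le_log (by positivity) h2
  have ht1 := aux_t1 C N q (Real.log N) (Real.log (N / q)) (Real.log 2)
    hC hN0 hq2 hL2 hl2' hLq3 hLqhalf
  have hlq1 : Real.log q ≤ (q:ℝ) - 1 := by
    have := Real.log_le_sub_one_of_pos hq0
    linarith
  have hLle : Real.log N ≤ Real.log q + (q:ℝ) * Real.log b + (N / ((q:ℝ) * (b:ℝ)^q) - 1) := by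
    have hfrac : (0:ℝ) < N / ((q:ℝ) * (b:ℝ)^q) := by positivity
    have h1 := Real.log_le_sub_one_of_pos hfrac
    have hsplit : Real.log N = Real.log ((q:ℝ) * (b:ℝ)^q) + Real.log (N / ((q:ℝ) * (b:ℝ)^q)) := by
      rw [Real.log_div (by positivity) (by positivity)]; ring
    rw [hlogqB] at hsplit
    linarith
  have ht2 := aux_t2 C N q ((b:ℝ)^q) (Real.log N) (Real.log b) (Real.log 2) (Real.log q)
    hC hq2 hB4 hl2' hlbl2 hN hL2 hlq1 hLle
  rw [hlogB]
  calc (q:ℝ)^2 * (C * (N / q) / (Real.log (N/q)) ^ 4 + C * ((b:ℝ)^q) / ((q:ℝ) * Real.log b) ^ 4)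
      = (q:ℝ)^2 * (C * (N/q) / (Real.log (N/q))^4)
        + (q:ℝ)^2 * (C * ((b:ℝ)^q) / ((q:ℝ) * Real.log b)^4) := by ring
    _ ≤ 7 * C * N / ((q:ℝ)^2 * Real.log N) + 13 * C * N / ((q:ℝ)^2 * Real.log N) :=
        add_le_add ht1 ht2
    _ = 20 * C * N / ((q:ℝ)^2 * Real.log N) := by ring
set_option maxHeartbeats 1000000 in
theorem stmt_19 :
    ∀ C : ℝ, 0 < C → ∃ C' : ℝ, 0 < C' ∧
      ∀ b q : ℕ, 2 ≤ b → q.Prime → ¬ q ∣ b →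
      ∀ N : ℝ, (q : ℝ) * (b : ℝ) ^ q < N →
      -- Siegel–Walfisz type hypothesis, uniform in residues coprime to q(q-1)
      (∀ x : ℝ, 2 ≤ x → ∀ r : ℕ, r.Coprime (q * (q - 1)) →
        |(primePiMod x (q * (q - 1)) r : ℝ) -
            (primePi x : ℝ) / (Nat.totient (q * (q - 1)) : ℝ)| ≤
          C * x / (Real.log x) ^ 4) →
      ∃ ε : ℕ → ℝ,
        (∀ k < q,
          ((Nat.card {p : ℕ | p.Prime ∧ b ^ q < p ∧ (p : ℝ) ≤ N / q ∧
              IsUnit ((p : ZMod (q * (q - 1)))) ∧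
              (b : ZMod q) ^ (p : ZMod (q * (q - 1))).val =
                (k : ZMod q) * ((p : ZMod (q * (q - 1))).val : ZMod q) + (b : ZMod q)} : ℕ) : ℝ) =
            ((Nat.card {r : ZMod (q * (q - 1)) | IsUnit r ∧
              (b : ZMod q) ^ r.val =
                (k : ZMod q) * (r.val : ZMod q) + (b : ZMod q)} : ℕ) : ℝ) /
              (Nat.totient (q * (q - 1)) : ℝ) *
              ((Nat.card {p : ℕ | p.Prime ∧ b ^ q < p ∧ (p : ℝ) ≤ N / q} : ℕ) : ℝ) + ε k) ∧
        ∑ k ∈ Finset.range q, |ε k| ≤ C' * N / ((q : ℝ) ^ 2 * Real.log N) := by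
  classical
  intro C hC
  refine ⟨20 * C, by positivity, ?_⟩
  intro b q hb hq hqb N hN hyp
  have hq2 : 2 ≤ q := hq.two_le
  set m := q * (q - 1) with hm_def
  have hm2 : 2 ≤ m := by
    have h1 : 1 ≤ q - 1 := by omega
    calc 2 = 2 * 1 := rfl
    _ ≤ q * (q - 1) := Nat.mul_le_mul hq2 h1
  haveI : NeZero m := ⟨by omega⟩
  haveI : NeZero q := ⟨by omega⟩
  have hq0R : (0:ℝ) < q := by
    have : (2:ℝ) ≤ q := by exact_mod_cast hq2
    linarith
  have hb4 : 4 ≤ b ^ q := by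
    calc 4 = 2 ^ 2 := rfl
    _ ≤ b ^ 2 := Nat.pow_le_pow_left hb 2
    _ ≤ b ^ q := Nat.pow_le_pow_right (by omega) hq2
  have hmbq : m ≤ b ^ q := le_trans (aux_mul_le_two_pow q) (Nat.pow_le_pow_left hb q)
  have hxB : ((b ^ q : ℕ) : ℝ) = (b:ℝ) ^ q := by push_cast; ring
  set xB : ℝ := (b:ℝ) ^ q with hxBdef
  have hxB4 : (4:ℝ) ≤ xB := by rw [← hxB]; exact_mod_cast hb4
  have hNq : xB < N / q := (lt_div_iff₀ hq0R).mpr (by rw [hxBdef]; nlinarith)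
  have hNq0 : (0:ℝ) < N / q := by linarith
  set M : ℕ := ⌊N / q⌋₊ with hM
  have hmem : ∀ p : ℕ, (p:ℝ) ≤ N / q → p < M + 1 := by
    intro p hp
    have := Nat.le_floor hp
    omega
  set A : ℝ → ZMod m → Finset ℕ := fun x r =>
    (Finset.range (M+1)).filter (fun p => p.Prime ∧ (p:ℝ) ≤ x ∧ (p : ZMod m) = r) with hA
  set Pf : ℝ → Finset ℕ := fun x =>
    (Finset.range (M+1)).filter (fun p => p.Prime ∧ (p:ℝ) ≤ x) with hPf
  set T : Finset ℕ :=
    (Finset.range (M+1)).filter (fun p => p.Prime ∧ b^q < p ∧ (p:ℝ) ≤ N/q) with hT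
  set Zk : ℕ → Finset (ZMod m) := fun k =>
    Finset.univ.filter (fun r => IsUnit r ∧
      (b : ZMod q) ^ r.val = (k : ZMod q) * (r.val : ZMod q) + (b : ZMod q)) with hZk
  set Fk : ℕ → Finset ℕ := fun k => T.filter (fun p => ((p : ZMod m)) ∈ Zk k) with hFk
  set φR : ℝ := (Nat.totient m : ℝ) with hφR
  have hφ0 : (0:ℝ) < φR := by
    rw [hφR]
    exact_mod_cast Nat.totient_pos.mpr (by omega)
  -- card identifications
  have hπ : ∀ x : ℝ, x ≤ N / q → primePi x = (Pf x).card := by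
    intro x hx
    simp only [hPf]
    rw [primePi]
    exact aux_card_filter (fun p hp => hmem p (le_trans hp.2 hx))
  have hπm : ∀ x : ℝ, x ≤ N / q → ∀ r : ZMod m, primePiMod x m r.val = (A x r).card := by
    intro x hx r
    simp only [hA]
    rw [primePiMod, aux_card_filter (fun p hp => hmem p (le_trans hp.2.1 hx))]
    congr 1
    ext p
    simp only [Finset.mem_filter, Finset.mem_range]
    rw [aux_mod_iff]
  have hcardT : Nat.card {p : ℕ | p.Prime ∧ b ^ q < p ∧ (p : ℝ) ≤ N / q} = T.card := by
    simp only [hT]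
    exact aux_card_filter (fun p hp => hmem p hp.2.2)
  have hcardZ : ∀ k : ℕ, Nat.card {r : ZMod m | IsUnit r ∧
      (b : ZMod q) ^ r.val = (k : ZMod q) * (r.val : ZMod q) + (b : ZMod q)} = (Zk k).card := by
    intro k
    simp only [hZk]
    exact aux_card_filter_zmod _
  have hcardF : ∀ k : ℕ, Nat.card {p : ℕ | p.Prime ∧ b ^ q < p ∧ (p : ℝ) ≤ N / q ∧
      IsUnit ((p : ZMod m)) ∧
      (b : ZMod q) ^ (p : ZMod m).val =
        (k : ZMod q) * ((p : ZMod m).val : ZMod q) + (b : ZMod q)} = (Fk k).card := by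
    intro k
    simp only [hFk, hT, hZk]
    rw [aux_card_filter (fun p hp => hmem p hp.2.2.1)]
    congr 1
    ext p
    simp only [Finset.mem_filter, Finset.mem_range, Finset.mem_univ, true_and]
    tauto
  -- decomposition identities
  have hAsub : ∀ r : ZMod m, A xB r ⊆ A (N/q) r := by
    intro r p hp
    simp only [hA, Finset.mem_filter, Finset.mem_range] at hp ⊢
    obtain ⟨h1, h2, h3, h4⟩ := hp
    exact ⟨h1, h2, le_trans h3 hNq.le, h4⟩
  have hPsub : Pf xB ⊆ Pf (N/q) := by
    intro p hp
    simp only [hPf, Finset.mem_filter, Finset.mem_range] at hp ⊢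
    obtain ⟨h1, h2, h3⟩ := hp
    exact ⟨h1, h2, le_trans h3 hNq.le⟩
  have hTcard : (T.card : ℝ) = ((Pf (N/q)).card : ℝ) - ((Pf xB).card : ℝ) := by
    have hTeq : T = Pf (N/q) \ Pf xB := by
      simp only [hT, hPf]
      ext p
      simp only [Finset.mem_sdiff, Finset.mem_filter, Finset.mem_range]
      constructor
      · rintro ⟨hr, hp, hbp, hle⟩
        refine ⟨⟨hr, hp, hle⟩, ?_⟩
        rintro ⟨-, -, hle2⟩
        have : p ≤ b ^ q := by
          rw [hxBdef] at hle2
          exact_mod_cast hle2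
        omega
      · rintro ⟨⟨hr, hp, hle⟩, hnot⟩
        refine ⟨hr, hp, ?_, hle⟩
        by_contra hc
        push_neg at hc
        exact hnot ⟨hr, hp, by rw [hxBdef]; exact_mod_cast hc⟩
    rw [hTeq, Finset.card_sdiff_of_subset hPsub, Nat.cast_sub (Finset.card_le_card hPsub)]
  have hFkcard : ∀ k : ℕ, ((Fk k).card : ℝ) =
      ∑ r ∈ Zk k, (((A (N/q) r).card : ℝ) - ((A xB r).card : ℝ)) := by
    intro k
    have h1 : (Fk k).card = ∑ r ∈ Zk k, ((Fk k).filter (fun (p : ℕ) => ((p : ZMod m) = r))).card :=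
      Finset.card_eq_sum_card_fiberwise (fun p hp => by
        simp only [hFk, Finset.mem_coe, Finset.mem_filter] at hp
        exact hp.2)
    have h2 : ∀ r ∈ Zk k, (Fk k).filter (fun (p : ℕ) => ((p : ZMod m) = r)) = A (N/q) r \ A xB r := by
      intro r hr
      simp only [hFk, hT, hA]
      ext p
      simp only [Finset.mem_filter, Finset.mem_sdiff, Finset.mem_range]
      constructor
      · rintro ⟨⟨⟨hrng, hp, hbp, hle⟩, hmemZ⟩, hcoe⟩
        refine ⟨⟨hrng, hp, hle, hcoe⟩, ?_⟩
        rintro ⟨-, -, hle2, -⟩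
        have : p ≤ b ^ q := by
          rw [hxBdef] at hle2
          exact_mod_cast hle2
        omega
      · rintro ⟨⟨hrng, hp, hle, hcoe⟩, hnot⟩
        have hbp : b ^ q < p := by
          by_contra hc
          push_neg at hc
          exact hnot ⟨hrng, hp, by rw [hxBdef]; exact_mod_cast hc, hcoe⟩
        exact ⟨⟨⟨hrng, hp, hbp, hle⟩, by rw [hcoe]; exact hr⟩, hcoe⟩
    rw [h1, Nat.cast_sum]
    apply Finset.sum_congr rfl
    intro r hr
    rw [h2 r hr, Finset.card_sdiff_of_subset (hAsub r), Nat.cast_sub (Finset.card_le_card (hAsub r))]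
  have hZsum : (∑ k ∈ Finset.range q, ((Zk k).card : ℝ)) ≤ (m : ℝ) := by
    have hdisj : ∀ k1 ∈ Finset.range q, ∀ k2 ∈ Finset.range q, k1 ≠ k2 →
        Disjoint (Zk k1) (Zk k2) := by
      intro k1 hk1 k2 hk2 hne
      rw [Finset.disjoint_left]
      intro r h1 h2
      simp only [hZk, Finset.mem_filter, Finset.mem_univ, true_and] at h1 h2
      obtain ⟨hu, he1⟩ := h1
      obtain ⟨-, he2⟩ := h2
      have hcop : Nat.Coprime r.val m := aux_unit_coprime hu
      have hcopq : Nat.Coprime r.val q :=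
        Nat.Coprime.coprime_dvd_right ⟨q - 1, rfl⟩ hcop
      have hvu : IsUnit ((r.val : ZMod q)) := (ZMod.isUnit_iff_coprime _ _).mpr hcopq
      have heq : (k1 : ZMod q) * (r.val : ZMod q) = (k2 : ZMod q) * (r.val : ZMod q) := by
        have h3 := he1.symm.trans he2
        exact add_right_cancel h3
      have hkk : (k1 : ZMod q) = (k2 : ZMod q) := by
        rw [mul_comm ((k1 : ZMod q)), mul_comm ((k2 : ZMod q))] at heq
        exact hvu.mul_left_cancel heq
      have hmod := (ZMod.natCast_eq_natCast_iff' k1 k2 q).mp hkk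
      rw [Nat.mod_eq_of_lt (Finset.mem_range.mp hk1),
        Nat.mod_eq_of_lt (Finset.mem_range.mp hk2)] at hmod
      exact hne hmod
    have hnat : (∑ k ∈ Finset.range q, (Zk k).card) ≤ m := by
      rw [← Finset.card_biUnion hdisj]
      calc ((Finset.range q).biUnion Zk).card ≤ Fintype.card (ZMod m) := Finset.card_le_univ _
        _ = m := ZMod.card m
    exact_mod_cast hnat
  -- error bounds per residue
  set E1 : ℝ := C * (N / q) / (Real.log (N / q)) ^ 4 with hE1def
  set E2 : ℝ := C * xB / (Real.log xB) ^ 4 with hE2def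
  have hbound : ∀ k : ℕ, ∀ r ∈ Zk k,
      |((A (N/q) r).card : ℝ) - ((Pf (N/q)).card : ℝ) / φR| ≤ E1 ∧
      |((A xB r).card : ℝ) - ((Pf xB).card : ℝ) / φR| ≤ E2 := by
    intro k r hr
    simp only [hZk, Finset.mem_filter, Finset.mem_univ, true_and] at hr
    have hcop : Nat.Coprime r.val m := aux_unit_coprime hr.1
    constructor
    · have h := hyp (N / q) (by linarith) r.val hcop
      rwa [hπm (N / q) le_rfl r, hπ (N / q) le_rfl] at h
    · have h := hyp xB (by linarith) r.val hcop
      rwa [hπm xB hNq.le r, hπ xB hNq.le] at h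
  have hE10 : 0 ≤ E1 := by
    rw [hE1def]
    exact div_nonneg (mul_nonneg hC.le hNq0.le) (by positivity)
  have hE20 : 0 ≤ E2 := by
    rw [hE2def]
    exact div_nonneg (mul_nonneg hC.le (by linarith)) (by positivity)
  refine ⟨fun k => ((Nat.card {p : ℕ | p.Prime ∧ b ^ q < p ∧ (p : ℝ) ≤ N / q ∧
      IsUnit ((p : ZMod m)) ∧
      (b : ZMod q) ^ (p : ZMod m).val =
        (k : ZMod q) * ((p : ZMod m).val : ZMod q) + (b : ZMod q)} : ℕ) : ℝ) -
      ((Nat.card {r : ZMod m | IsUnit r ∧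
        (b : ZMod q) ^ r.val = (k : ZMod q) * (r.val : ZMod q) + (b : ZMod q)} : ℕ) : ℝ) / φR *
      ((Nat.card {p : ℕ | p.Prime ∧ b ^ q < p ∧ (p : ℝ) ≤ N / q} : ℕ) : ℝ),
    fun k hk => by ring, ?_⟩
  -- final bound
  have hperk : ∀ k : ℕ, |((Fk k).card : ℝ) - ((Zk k).card : ℝ) / φR * (T.card : ℝ)|
      ≤ ((Zk k).card : ℝ) * (E1 + E2) := by
    intro k
    have hdecomp : ((Fk k).card : ℝ) - ((Zk k).card : ℝ) / φR * (T.card : ℝ)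
        = (∑ r ∈ Zk k, (((A (N/q) r).card : ℝ) - ((Pf (N/q)).card : ℝ) / φR))
          - ∑ r ∈ Zk k, (((A xB r).card : ℝ) - ((Pf xB).card : ℝ) / φR) := by
      rw [hFkcard k, hTcard, Finset.sum_sub_distrib, Finset.sum_sub_distrib,
        Finset.sum_sub_distrib, Finset.sum_const, Finset.sum_const, nsmul_eq_mul, nsmul_eq_mul]
      ring
    rw [hdecomp]
    have hS1 : |∑ r ∈ Zk k, (((A (N/q) r).card : ℝ) - ((Pf (N/q)).card : ℝ) / φR)|
        ≤ ((Zk k).card : ℝ) * E1 := by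
      calc |∑ r ∈ Zk k, (((A (N/q) r).card : ℝ) - ((Pf (N/q)).card : ℝ) / φR)|
          ≤ ∑ r ∈ Zk k, |(((A (N/q) r).card : ℝ) - ((Pf (N/q)).card : ℝ) / φR)| :=
            Finset.abs_sum_le_sum_abs _ _
        _ ≤ ∑ _r ∈ Zk k, E1 := Finset.sum_le_sum (fun r hr => (hbound k r hr).1)
        _ = ((Zk k).card : ℝ) * E1 := by rw [Finset.sum_const, nsmul_eq_mul]
    have hS2 : |∑ r ∈ Zk k, (((A xB r).card : ℝ) - ((Pf xB).card : ℝ) / φR)|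
        ≤ ((Zk k).card : ℝ) * E2 := by
      calc |∑ r ∈ Zk k, (((A xB r).card : ℝ) - ((Pf xB).card : ℝ) / φR)|
          ≤ ∑ r ∈ Zk k, |(((A xB r).card : ℝ) - ((Pf xB).card : ℝ) / φR)| :=
            Finset.abs_sum_le_sum_abs _ _
        _ ≤ ∑ _r ∈ Zk k, E2 := Finset.sum_le_sum (fun r hr => (hbound k r hr).2)
        _ = ((Zk k).card : ℝ) * E2 := by rw [Finset.sum_const, nsmul_eq_mul]
    have htri := abs_sub_le
      (∑ r ∈ Zk k, (((A (N/q) r).card : ℝ) - ((Pf (N/q)).card : ℝ) / φR)) 0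
      (∑ r ∈ Zk k, (((A xB r).card : ℝ) - ((Pf xB).card : ℝ) / φR))
    simp only [sub_zero, zero_sub, abs_neg] at htri
    nlinarith [abs_nonneg (∑ r ∈ Zk k, (((A (N/q) r).card : ℝ) - ((Pf (N/q)).card : ℝ) / φR))]
  calc ∑ k ∈ Finset.range q, |((Nat.card {p : ℕ | p.Prime ∧ b ^ q < p ∧ (p : ℝ) ≤ N / q ∧
          IsUnit ((p : ZMod m)) ∧
          (b : ZMod q) ^ (p : ZMod m).val =
            (k : ZMod q) * ((p : ZMod m).val : ZMod q) + (b : ZMod q)} : ℕ) : ℝ) -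
          ((Nat.card {r : ZMod m | IsUnit r ∧
            (b : ZMod q) ^ r.val = (k : ZMod q) * (r.val : ZMod q) + (b : ZMod q)} : ℕ) : ℝ) / φR *
          ((Nat.card {p : ℕ | p.Prime ∧ b ^ q < p ∧ (p : ℝ) ≤ N / q} : ℕ) : ℝ)|
      = ∑ k ∈ Finset.range q, |((Fk k).card : ℝ) - ((Zk k).card : ℝ) / φR * (T.card : ℝ)| := by
        apply Finset.sum_congr rfl
        intro k _
        rw [hcardT, hcardZ k, hcardF k]
    _ ≤ ∑ k ∈ Finset.range q, ((Zk k).card : ℝ) * (E1 + E2) := by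
        exact Finset.sum_le_sum (fun k _ => hperk k)
    _ = (∑ k ∈ Finset.range q, ((Zk k).card : ℝ)) * (E1 + E2) := by
        rw [← Finset.sum_mul]
    _ ≤ (m : ℝ) * (E1 + E2) := by
        apply mul_le_mul_of_nonneg_right hZsum (by linarith)
    _ ≤ (q:ℝ)^2 * (E1 + E2) := by
        apply mul_le_mul_of_nonneg_right _ (by linarith)
        have h : m ≤ q ^ 2 := by
          rw [hm_def, pow_two]
          exact Nat.mul_le_mul (le_refl q) (Nat.sub_le q 1)
        exact_mod_cast h
    _ ≤ 20 * C * N / ((q:ℝ)^2 * Real.log N) := by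
        rw [hE1def, hE2def, hxBdef]
        exact aux_analytic C hC b q hb hq2 N hN
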